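/- If T is a Silver tree with stem s = u₀(T) (the longest string s ∈ T with T↾s = T) of length n, and σ = 0^n⌢1 ∈ 2^{n+1}, then σ ∔ T = T, while the induced map a ↦ σ ∔ a on [T] has no fixed points (σ ∔ a ≠ a for all a ∈ [T]). -/

import Mathlib

open List

/-- Initial segment of length `n` of an infinite binary sequence. -/
def seqTake (a : ℕ → Bool) (n : ℕ) : List Bool := List.ofFn (fun i : Fin n => a i)

/-- The shift `σ ∔ a` : flip bits of `a` at positions `i < |σ|` where `σ(i) = 1`
    (addition modulo 2), leave other positions unchanged. -/
def shiftSeq (σ : List Bool) (a : ℕ → Bool) : ℕ → Bool :=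
  fun i => if i < σ.length then xor (σ.getD i false) (a i) else a i

/-- The shift `σ ∔ v` of a finite string `v`. -/
def shiftStr (σ v : List Bool) : List Bool :=
  seqTake (shiftSeq σ (fun i => v.getD i false)) v.length

/-- The equivalence relation `E₀`: the sequences differ in finitely many positions. -/
def E0 (a b : ℕ → Bool) : Prop := {k | a k ≠ b k}.Finite

/-- The set `[T]` of infinite branches of a tree `T ⊆ 2^{<ω}`. -/
def branches (T : Set (List Bool)) : Set (ℕ → Bool) := {a | ∀ n, seqTake a n ∈ T}

/-- The portion `T↾u = {s ∈ T : u ⊆ s ∨ s ⊆ u}`. -/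
def portion (T : Set (List Bool)) (u : List Bool) : Set (List Bool) :=
  {s ∈ T | u <+: s ∨ s <+: u}

/-- A nonempty tree closed under initial segments. -/
def IsTree (T : Set (List Bool)) : Prop :=
  T.Nonempty ∧ ∀ s ∈ T, ∀ t : List Bool, t <+: s → t ∈ T

/-- A perfect tree: a tree in which every node extends to a splitting node. -/
def IsPerfectTree (T : Set (List Bool)) : Prop :=
  IsTree T ∧ ∀ s ∈ T, ∃ t ∈ T, s <+: t ∧ t ++ [false] ∈ T ∧ t ++ [true] ∈ T

/-- `u₀⌢i₀⌢u₁⌢i₁⌢…⌢uₙ⌢iₙ`. -/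
def silverPrefix (u : ℕ → List Bool) (i : ℕ → Bool) : ℕ → List Bool
  | 0 => u 0 ++ [i 0]
  | n+1 => silverPrefix u i n ++ u (n+1) ++ [i (n+1)]

/-- The branch `u₀⌢i₀⌢u₁⌢i₁⌢…` of the Silver tree with strings `uₖ` and bits `iₖ`. -/
def silverBranch (u : ℕ → List Bool) (i : ℕ → Bool) : ℕ → Bool :=
  fun m => (silverPrefix u i m).getD m false

/-- `T` is the Silver tree with defining strings `uₖ`: `T` consists exactly of all
    initial segments of the branches `u₀⌢i₀⌢u₁⌢i₁⌢…`. -/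
def SilverTreeWith (u : ℕ → List Bool) (T : Set (List Bool)) : Prop :=
  T = {s | ∃ i : ℕ → Bool, s = seqTake (silverBranch u i) s.length}

def IsSilver (T : Set (List Bool)) : Prop := ∃ u, SilverTreeWith u T

/-- The splitting levels `hₙ = |u₀|+1+…+|u_{n-1}|+1+|uₙ|` of a Silver tree. -/
def hLevel (u : ℕ → List Bool) (n : ℕ) : ℕ :=
  (∑ k ∈ Finset.range n, ((u k).length + 1)) + (u n).length

/-- `S` n-refines the Silver tree `T` (with strings `uT`): `S ⊆ T` and the first
    `n` defining strings agree. -/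
def RefinesN (uT : ℕ → List Bool) (S T : Set (List Bool)) (n : ℕ) : Prop :=
  S ⊆ T ∧ ∃ uS, SilverTreeWith uS S ∧ ∀ k < n, uS k = uT k

/-- `S` is clopen in `T`: a finite union of portions of `T`. -/
def ClopenIn (S T : Set (List Bool)) : Prop :=
  ∃ F : Finset (List Bool), ↑F ⊆ T ∧ S = ⋃ u ∈ F, portion T u

-- aux lemmas
lemma sigma_getD (n m : ℕ) :
    (List.replicate n false ++ [true]).getD m false = decide (m = n) := by
  rcases lt_trichotomy m n with h | h | h
  · rw [List.getD_append _ _ _ _ (by simpa using h)]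
    simp [List.getD_eq_getElem?_getD, h, Nat.ne_of_lt h]
  · subst h
    rw [List.getD_append_right _ _ _ _ (by simp)]
    simp
  · rw [List.getD_append_right _ _ _ _ (by simp; omega)]
    simp only [List.length_replicate]
    have : m - n ≠ 0 := by omega
    rcases Nat.exists_eq_succ_of_ne_zero this with ⟨k, hk⟩
    rw [hk]
    simp [List.getD_cons_succ, Nat.ne_of_gt h]

lemma silverPrefix_shape (u : ℕ → List Bool) (i j : ℕ → Bool)
    (hij : ∀ k, k ≠ 0 → i k = j k) (m : ℕ) :
    ∃ w, silverPrefix u i m = u 0 ++ i 0 :: w ∧ silverPrefix u j m = u 0 ++ j 0 :: w := by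
  induction m with
  | zero => exact ⟨[], by simp [silverPrefix], by simp [silverPrefix]⟩
  | succ m ih =>
    obtain ⟨w, h1, h2⟩ := ih
    refine ⟨w ++ u (m+1) ++ [i (m+1)], ?_, ?_⟩
    · simp [silverPrefix, h1]
    · simp [silverPrefix, h2, ← hij (m+1) (by omega)]

lemma silverBranch_pt (u : ℕ → List Bool) (i j : ℕ → Bool)
    (hij : ∀ k, k ≠ 0 → i k = j k) (m : ℕ) :
    silverBranch u j m = if m = (u 0).length then j 0 else silverBranch u i m := by
  obtain ⟨w, h1, h2⟩ := silverPrefix_shape u i j hij m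
  unfold silverBranch
  rw [h1, h2]
  set n := (u 0).length with hn
  rcases lt_trichotomy m n with h | h | h
  · rw [List.getD_append _ _ _ _ (by omega), List.getD_append _ _ _ _ (by omega)]
    simp [Nat.ne_of_lt h]
  · subst h; rw [List.getD_append_right _ _ _ _ (by omega),
      List.getD_append_right _ _ _ _ (by omega)]
    simp [hn]
  · rw [List.getD_append_right _ _ _ _ (by omega),
      List.getD_append_right _ _ _ _ (by omega)]
    have : m - n ≠ 0 := by omega
    rcases Nat.exists_eq_succ_of_ne_zero this with ⟨k, hk⟩
    rw [hk]
    simp [List.getD_cons_succ, Nat.ne_of_gt h]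

lemma silverBranch_at_stem (u : ℕ → List Bool) (i : ℕ → Bool) :
    silverBranch u i (u 0).length = i 0 := by
  have := silverBranch_pt u i i (fun _ _ => rfl) (u 0).length
  simpa using this

lemma shiftSeq_sigma (n : ℕ) (a : ℕ → Bool) (m : ℕ) :
    shiftSeq (List.replicate n false ++ [true]) a m = if m = n then !(a m) else a m := by
  unfold shiftSeq
  have hlen : (List.replicate n false ++ [true]).length = n + 1 := by simp
  rw [hlen, sigma_getD]
  by_cases hm : m = n
  · simp [hm]
  · by_cases hlt : m < n + 1 <;> simp [hm, hlt]

lemma shiftStr_length (σ v : List Bool) : (shiftStr σ v).length = v.length := by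
  simp [shiftStr, seqTake]

lemma shiftStr_getElem (σ v : List Bool) (m : ℕ) (hm : m < v.length) :
    (shiftStr σ v).getD m false = shiftSeq σ (fun i => v.getD i false) m := by
  simp only [shiftStr, seqTake]
  simp [hm]

theorem silver_stem_shift (u : ℕ → List Bool) (T : Set (List Bool))
    (hT : SilverTreeWith u T) (s : List Bool) (hs : s = u 0)
    (σ : List Bool) (hσ : σ = List.replicate s.length false ++ [true]) :
    (shiftStr σ) '' T = T ∧ ∀ a ∈ branches T, shiftSeq σ a ≠ a := by
  subst hs; subst hσ
  set n := (u 0).length with hn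
  have hshift : ∀ (a : ℕ → Bool) (m : ℕ),
      shiftSeq (List.replicate n false ++ [true]) a m = if m = n then !(a m) else a m :=
    shiftSeq_sigma n
  set σ := List.replicate n false ++ [true] with hσ
  have hgetDT : ∀ (i : ℕ → Bool) (L m : ℕ), m < L →
      (seqTake (silverBranch u i) L).getD m false = silverBranch u i m := by
    intro i L m hm
    simp [seqTake, hm]
  have hmaps : ∀ v ∈ T, shiftStr σ v ∈ T := by
    intro v hv
    rw [hT] at hv ⊢
    obtain ⟨i, hi⟩ := hv
    have hv' : ∀ m, m < v.length → v.getD m false = silverBranch u i m := by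
      intro m hm
      conv_lhs => rw [hi]
      exact hgetDT i v.length m hm
    set j : ℕ → Bool := fun k => if k = 0 then !(i 0) else i k with hj
    have hbj : ∀ m, silverBranch u j m = if m = n then !(i 0) else silverBranch u i m := by
      intro m
      rw [silverBranch_pt u i j (by intro k hk; simp [hj, hk]) m]
      simp [hj, hn]
    refine ⟨j, ?_⟩
    rw [shiftStr_length]
    apply List.ext_getElem (by simp [shiftStr_length, seqTake])
    intro m h1 h2
    have hmv : m < v.length := by rwa [shiftStr_length] at h1
    rw [← List.getD_eq_getElem _ false h1, ← List.getD_eq_getElem _ false h2]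
    rw [shiftStr_getElem _ _ _ hmv, hgetDT j v.length m hmv, hbj]
    simp only [hshift]
    rw [hv' m hmv]
    by_cases hm : m = n
    · have hstem := silverBranch_at_stem u i
      rw [← hn] at hstem
      rw [if_pos hm, if_pos hm, hm, hstem]
    · rw [if_neg hm, if_neg hm]
  have hinv : ∀ v : List Bool, shiftStr σ (shiftStr σ v) = v := by
    intro v
    apply List.ext_getElem (by simp [shiftStr_length])
    intro m h1 h2
    have hmv : m < v.length := h2
    rw [← List.getD_eq_getElem _ false h1, ← List.getD_eq_getElem _ false h2]
    rw [shiftStr_getElem _ _ _ (by rw [shiftStr_length]; exact hmv)]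
    simp only [hshift]
    by_cases hm : m = n
    · rw [if_pos hm, shiftStr_getElem _ _ _ hmv]
      simp only [hshift, if_pos hm, Bool.not_not]
    · rw [if_neg hm, shiftStr_getElem _ _ _ hmv]
      simp only [hshift, if_neg hm]
  constructor
  · apply Set.Subset.antisymm
    · rintro _ ⟨v, hv, rfl⟩
      exact hmaps v hv
    · intro v hv
      exact ⟨shiftStr σ v, hmaps v hv, hinv v⟩
  · intro a _ hcontra
    have := congrFun hcontra n
    rw [hshift] at this
    simp at this
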